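/- Let T be a tree with leaf set L and let e, e' be distinct edges of T. Then the splits P_e and P_{e'} induced by removing e and e' respectively are compatible: exactly one of the four intersections P_e∩P_{e'}, P_e∩P_{e'}ᶜ, P_eᶜ∩P_{e'}, P_eᶜ∩P_{e'}ᶜ is empty. -/

import Mathlib

open SimpleGraph

section Aux
variable {V : Type*}

private lemma cross {G : SimpleGraph V} {e₁ : Sym2 V} {x y a₂ : V} (b₂ : V)
    (h : (G.deleteEdges {e₁}).Reachable x y)
    (hna : ¬(G.deleteEdges {e₁}).Reachable x a₂) :
    (G.deleteEdges {s(a₂, b₂)}).Reachable x y := by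
  classical
  obtain ⟨p⟩ := h
  have hs : s(a₂, b₂) ∉ p.edges := by
    intro hmem
    exact hna ⟨p.takeUntil a₂ (p.fst_mem_support_of_mem_edges hmem)⟩
  have hG : ∀ e ∈ p.edges, e ∈ G.edgeSet := fun e he =>
    (edgeSet_mono (G.deleteEdges_le _)) (p.edges_subset_edgeSet he)
  refine ⟨(p.transfer G hG).toDeleteEdges {s(a₂, b₂)} ?_⟩
  intro e he
  rw [Walk.edges_transfer] at he
  simp only [Set.mem_singleton_iff]
  rintro rfl
  exact hs he

private lemma br {G : SimpleGraph V} (hT : G.IsTree) {a b : V} (h : G.Adj a b) :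
    ¬(G.deleteEdges {s(a, b)}).Reachable a b := by
  have hb := (isAcyclic_iff_forall_adj_isBridge.mp hT.IsAcyclic) h
  exact isBridge_iff.mp hb

private lemma adjd {G : SimpleGraph V} {a b : V} (h : G.Adj a b) {e : Sym2 V}
    (hne : s(a, b) ≠ e) : (G.deleteEdges {e}).Adj a b := by
  rw [deleteEdges_adj]
  exact ⟨h, by simpa using hne⟩

private lemma side_aux {G : SimpleGraph V} {a b : V} :
    ∀ {x y : V} (_ : G.Walk x y),
      (G.deleteEdges {s(a, b)}).Reachable x y ∨
      ((G.deleteEdges {s(a, b)}).Reachable x a ∧ (G.deleteEdges {s(a, b)}).Reachable b y) ∨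
      ((G.deleteEdges {s(a, b)}).Reachable x b ∧ (G.deleteEdges {s(a, b)}).Reachable a y) := by
  intro x y p
  induction p with
  | nil => exact Or.inl (Reachable.refl _)
  | @cons x c y h p ih =>
    by_cases he : s(x, c) = s(a, b)
    · rcases Sym2.eq_iff.mp he with ⟨rfl, rfl⟩ | ⟨rfl, rfl⟩
      · rcases ih with h1 | ⟨h1, h2⟩ | ⟨h1, h2⟩
        · exact Or.inr (Or.inl ⟨Reachable.refl _, h1⟩)
        · exact Or.inr (Or.inl ⟨Reachable.refl _, h2⟩)
        · exact Or.inl h2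
      · rcases ih with h1 | ⟨h1, h2⟩ | ⟨h1, h2⟩
        · exact Or.inr (Or.inr ⟨Reachable.refl _, h1⟩)
        · exact Or.inl h2
        · exact Or.inr (Or.inr ⟨Reachable.refl _, h2⟩)
    · have hadj : (G.deleteEdges {s(a, b)}).Adj x c := adjd h he
      rcases ih with h1 | ⟨h1, h2⟩ | ⟨h1, h2⟩
      · exact Or.inl (hadj.reachable.trans h1)
      · exact Or.inr (Or.inl ⟨hadj.reachable.trans h1, h2⟩)
      · exact Or.inr (Or.inr ⟨hadj.reachable.trans h1, h2⟩)

private lemma side {G : SimpleGraph V} (hT : G.IsTree) {a b : V} (_ : G.Adj a b) (x : V) :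
    (G.deleteEdges {s(a, b)}).Reachable a x ∨ (G.deleteEdges {s(a, b)}).Reachable b x := by
  obtain ⟨p⟩ := hT.isConnected.preconnected a x
  rcases side_aux p with h | ⟨h1, h2⟩ | ⟨h1, h2⟩
  · exact Or.inl h
  · exact Or.inr h2
  · exact Or.inl h2

private lemma leaf_side {G : SimpleGraph V} [Fintype V] [DecidableRel G.Adj] (hT : G.IsTree) :
    ∀ (n : ℕ) {a b : V}, G.Adj a b →
      {z | (G.deleteEdges {s(a, b)}).Reachable a z}.ncard ≤ n →
      ∃ z, G.degree z = 1 ∧ (G.deleteEdges {s(a, b)}).Reachable a z := by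
  classical
  intro n
  induction n with
  | zero =>
    intro a b hab hcard
    exfalso
    have hmem : a ∈ {z | (G.deleteEdges {s(a, b)}).Reachable a z} := Reachable.refl _
    have := (Set.ncard_pos (Set.toFinite _)).mpr ⟨a, hmem⟩
    omega
  | succ n ih =>
    intro a b hab hcard
    by_cases hda : G.degree a = 1
    · exact ⟨a, hda, Reachable.refl _⟩
    · have hbmem : b ∈ G.neighborFinset a := by rw [mem_neighborFinset]; exact hab
      have hdd : G.degree a = (G.neighborFinset a).card := rfl
      have h1 : 1 ≤ (G.neighborFinset a).card := Finset.card_pos.mpr ⟨b, hbmem⟩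
      have h2 : 1 ≤ ((G.neighborFinset a).erase b).card := by
        rw [Finset.card_erase_of_mem hbmem]; omega
      obtain ⟨c, hc⟩ := Finset.card_pos.mp h2
      obtain ⟨hcb, hcmem⟩ := Finset.mem_erase.mp hc
      have hac : G.Adj a c := (mem_neighborFinset _ _ _).mp hcmem
      have hbrca : ¬(G.deleteEdges {s(c, a)}).Reachable c a := br hT hac.symm
      have hsub : ∀ z, (G.deleteEdges {s(c, a)}).Reachable c z →
          (G.deleteEdges {s(a, b)}).Reachable a z := by
        intro z hz
        have h' : (G.deleteEdges {s(a, b)}).Reachable c z := cross b hz hbrca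
        have hadjac : (G.deleteEdges {s(a, b)}).Adj a c := by
          refine adjd hac ?_
          intro h
          rcases Sym2.eq_iff.mp h with ⟨_, rfl⟩ | ⟨h1, h2⟩
          · exact hcb rfl
          · exact G.loopless.irrefl _ (h2 ▸ hac)
        exact hadjac.reachable.trans h'
      have hss : {z | (G.deleteEdges {s(c, a)}).Reachable c z} ⊂
          {z | (G.deleteEdges {s(a, b)}).Reachable a z} := by
        constructor
        · intro z hz; exact hsub z hz
        · intro hcon
          exact hbrca (hcon (Reachable.refl _ : (G.deleteEdges {s(a, b)}).Reachable a a))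
      have hlt := Set.ncard_lt_ncard hss (Set.toFinite _)
      obtain ⟨z, hzdeg, hz⟩ := ih hac.symm (by omega)
      exact ⟨z, hzdeg, hsub z hz⟩

private lemma key {G : SimpleGraph V} [Fintype V] [DecidableRel G.Adj] (hT : G.IsTree)
    (hdeg : ∀ w : V, G.degree w ≠ 2) {a b a' b' : V}
    (hab : G.Adj a b) (hab' : G.Adj a' b') (hne : s(a, b) ≠ s(a', b'))
    (h1 : (G.deleteEdges {s(a, b)}).Reachable b a')
    (h2 : (G.deleteEdges {s(a', b')}).Reachable b' a) :
    (∀ z, ¬((G.deleteEdges {s(a, b)}).Reachable a z ∧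
      (G.deleteEdges {s(a', b')}).Reachable a' z)) ∧
    (∃ z, G.degree z = 1 ∧ (G.deleteEdges {s(a, b)}).Reachable a z ∧
      ¬(G.deleteEdges {s(a', b')}).Reachable a' z) ∧
    (∃ z, G.degree z = 1 ∧ ¬(G.deleteEdges {s(a, b)}).Reachable a z ∧
      (G.deleteEdges {s(a', b')}).Reachable a' z) ∧
    (∃ z, G.degree z = 1 ∧ ¬(G.deleteEdges {s(a, b)}).Reachable a z ∧
      ¬(G.deleteEdges {s(a', b')}).Reachable a' z) := by
  classical
  have hB1 : ¬(G.deleteEdges {s(a, b)}).Reachable a b := br hT hab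
  have hB2 : ¬(G.deleteEdges {s(a', b')}).Reachable a' b' := br hT hab'
  have hadj1' : (G.deleteEdges {s(a, b)}).Adj a' b' := adjd hab' (Ne.symm hne)
  have h1b : (G.deleteEdges {s(a, b)}).Reachable b b' := h1.trans hadj1'.reachable
  have hadj2 : (G.deleteEdges {s(a', b')}).Adj a b := adjd hab hne
  have h2b : (G.deleteEdges {s(a', b')}).Reachable b' b := h2.trans hadj2.reachable
  have na' : ¬(G.deleteEdges {s(a, b)}).Reachable a a' := fun h => hB1 (h.trans h1.symm)
  have trans12 : ∀ z, (G.deleteEdges {s(a, b)}).Reachable a z →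
      (G.deleteEdges {s(a', b')}).Reachable a z := fun z hz => cross b' hz na'
  have part1 : ∀ z, ¬((G.deleteEdges {s(a, b)}).Reachable a z ∧
      (G.deleteEdges {s(a', b')}).Reachable a' z) := by
    rintro z ⟨hz1, hz2⟩
    exact hB2 ((hz2.trans (trans12 z hz1).symm).trans h2.symm)
  refine ⟨part1, ?_, ?_, ?_⟩
  · obtain ⟨z, hzdeg, hz⟩ := leaf_side hT _ hab le_rfl
    exact ⟨z, hzdeg, hz, fun hz2 => part1 z ⟨hz, hz2⟩⟩
  · obtain ⟨z, hzdeg, hz⟩ := leaf_side hT _ hab' le_rfl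
    exact ⟨z, hzdeg, fun hz1 => part1 z ⟨hz1, hz⟩, hz⟩
  · -- middle leaf
    by_cases hdb : G.degree b = 1
    · exact ⟨b, hdb, fun h => hB1 h, fun h => hB2 (h.trans h2b.symm)⟩
    · -- b has two neighbors besides a
      have hamem : a ∈ G.neighborFinset b := by rw [mem_neighborFinset]; exact hab.symm
      have hdd : G.degree b = (G.neighborFinset b).card := rfl
      have h1c : 1 ≤ (G.neighborFinset b).card := Finset.card_pos.mpr ⟨a, hamem⟩
      have hd2 := hdeg b
      have h2c : 2 ≤ ((G.neighborFinset b).erase a).card := by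
        rw [Finset.card_erase_of_mem hamem]; omega
      obtain ⟨w₁, h1m, w₂, h2m, hww⟩ := Finset.one_lt_card.mp h2c
      obtain ⟨hw1a, hw1m⟩ := Finset.mem_erase.mp h1m
      obtain ⟨hw2a, hw2m⟩ := Finset.mem_erase.mp h2m
      have hbw1 : G.Adj b w₁ := (mem_neighborFinset _ _ _).mp hw1m
      have hbw2 : G.Adj b w₂ := (mem_neighborFinset _ _ _).mp hw2m
      -- main: a good neighbor gives a middle leaf
      have main : ∀ w : V, G.Adj b w → w ≠ a → s(b, w) ≠ s(a', b') →
          ¬(G.deleteEdges {s(w, b)}).Reachable w a' →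
          ∃ z, G.degree z = 1 ∧ ¬(G.deleteEdges {s(a, b)}).Reachable a z ∧
            ¬(G.deleteEdges {s(a', b')}).Reachable a' z := by
        intro w hbw hwa hwe hna'
        obtain ⟨z, hzdeg, hzw⟩ := leaf_side hT _ hbw.symm le_rfl
        have hwb_br : ¬(G.deleteEdges {s(w, b)}).Reachable w b := br hT hbw.symm
        have h1z : (G.deleteEdges {s(b, a)}).Reachable w z := cross a hzw hwb_br
        rw [Sym2.eq_swap] at h1z
        have hadjbw1 : (G.deleteEdges {s(a, b)}).Adj b w := by
          refine adjd hbw ?_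
          intro h
          rcases Sym2.eq_iff.mp h with ⟨rfl, _⟩ | ⟨_, rfl⟩
          · exact G.loopless.irrefl _ hab
          · exact hwa rfl
        have hR1bz : (G.deleteEdges {s(a, b)}).Reachable b z := hadjbw1.reachable.trans h1z
        have hn1 : ¬(G.deleteEdges {s(a, b)}).Reachable a z := fun h => hB1 (h.trans hR1bz.symm)
        have h2z : (G.deleteEdges {s(a', b')}).Reachable w z := cross b' hzw hna'
        have hadjbw2 : (G.deleteEdges {s(a', b')}).Adj b w := adjd hbw hwe
        have hR2 : (G.deleteEdges {s(a', b')}).Reachable b' z :=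
          h2b.trans (hadjbw2.reachable.trans h2z)
        have hn2 : ¬(G.deleteEdges {s(a', b')}).Reachable a' z := fun h => hB2 (h.trans hR2.symm)
        exact ⟨z, hzdeg, hn1, hn2⟩
      -- disjointness of the two branch components
      have disjo : ∀ {x : V}, (G.deleteEdges {s(w₁, b)}).Reachable w₁ x →
          (G.deleteEdges {s(w₂, b)}).Reachable w₂ x → False := by
        intro x hx1 hx2
        have hb1 : ¬(G.deleteEdges {s(w₁, b)}).Reachable w₁ b := br hT hbw1.symm
        have h1' : (G.deleteEdges {s(b, w₂)}).Reachable w₁ x := cross w₂ hx1 hb1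
        rw [Sym2.eq_swap] at hx2
        have hcomb : (G.deleteEdges {s(b, w₂)}).Reachable w₁ w₂ := h1'.trans hx2.symm
        have hadj : (G.deleteEdges {s(b, w₂)}).Adj b w₁ := by
          refine adjd hbw1 ?_
          intro h
          rcases Sym2.eq_iff.mp h with ⟨_, h2⟩ | ⟨h2, _⟩
          · exact hww h2
          · exact G.loopless.irrefl _ (h2 ▸ hbw2)
        exact br hT hbw2 (hadj.reachable.trans hcomb)
      have goodness : ∃ w, G.Adj b w ∧ w ≠ a ∧ s(b, w) ≠ s(a', b') ∧
          ¬(G.deleteEdges {s(w, b)}).Reachable w a' := by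
        have hedne : s(b, w₁) ≠ s(b, w₂) := by
          intro h
          rcases Sym2.eq_iff.mp h with ⟨_, h2⟩ | ⟨h2, _⟩
          · exact hww h2
          · exact G.loopless.irrefl _ (h2 ▸ hbw2)
        by_cases hE1 : s(b, w₁) = s(a', b')
        · refine ⟨w₂, hbw2, hw2a, fun h => hedne (hE1.trans h.symm), ?_⟩
          rcases Sym2.eq_iff.mp hE1 with ⟨ha', hb'⟩ | ⟨hb', ha'⟩
          · exact ha' ▸ br hT hbw2.symm
          · subst ha'
            intro h
            exact disjo (Reachable.refl _) h
        · by_cases hE2 : s(b, w₂) = s(a', b')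
          · refine ⟨w₁, hbw1, hw1a, hE1, ?_⟩
            rcases Sym2.eq_iff.mp hE2 with ⟨ha', hb'⟩ | ⟨hb', ha'⟩
            · exact ha' ▸ br hT hbw1.symm
            · subst ha'
              intro h
              exact disjo h (Reachable.refl _)
          · by_cases hA : (G.deleteEdges {s(w₁, b)}).Reachable w₁ a' ∨
                (G.deleteEdges {s(w₁, b)}).Reachable w₁ b'
            · -- both a', b' on w₁ branch; use w₂
              have hadj' : (G.deleteEdges {s(w₁, b)}).Adj a' b' := by
                refine adjd hab' ?_
                intro h
                exact hE1 ((show s(b, w₁) = s(w₁, b) from Sym2.eq_swap).trans h.symm)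
              have haa' : (G.deleteEdges {s(w₁, b)}).Reachable w₁ a' := by
                rcases hA with h | h
                · exact h
                · exact h.trans hadj'.symm.reachable
              exact ⟨w₂, hbw2, hw2a, hE2, fun h => disjo haa' h⟩
            · push_neg at hA
              exact ⟨w₁, hbw1, hw1a, hE1, hA.1⟩
      obtain ⟨w, hbw, hwa, hwe, hna'⟩ := goodness
      exact main w hbw hwa hwe hna'

end Aux

/-- in a finite tree with no degree-2 vertices, the splits of the leaf
set induced by removing two distinct edges are compatible: exactly one of the four
pairwise intersections of the parts is empty. -/
theorem stmt9 {V : Type*} [Fintype V] (G : SimpleGraph V) [DecidableRel G.Adj]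
    (hT : G.IsTree)
    (hdeg : ∀ v : V, G.degree v ≠ 2)
    (u v u' v' : V) (huv : G.Adj u v) (huv' : G.Adj u' v')
    (hne : s(u, v) ≠ s(u', v')) :
    let leaves : Set V := {x | G.degree x = 1}
    let P : Set V := {x ∈ leaves | (G.deleteEdges {s(u, v)}).Reachable u x}
    let Q : Set V := {x ∈ leaves | (G.deleteEdges {s(u', v')}).Reachable u' x}
    (P ∩ Q = ∅ ∧ (P ∩ (leaves \ Q)).Nonempty ∧ ((leaves \ P) ∩ Q).Nonempty ∧
        ((leaves \ P) ∩ (leaves \ Q)).Nonempty) ∨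
    (P ∩ (leaves \ Q) = ∅ ∧ (P ∩ Q).Nonempty ∧ ((leaves \ P) ∩ Q).Nonempty ∧
        ((leaves \ P) ∩ (leaves \ Q)).Nonempty) ∨
    ((leaves \ P) ∩ Q = ∅ ∧ (P ∩ Q).Nonempty ∧ (P ∩ (leaves \ Q)).Nonempty ∧
        ((leaves \ P) ∩ (leaves \ Q)).Nonempty) ∨
    ((leaves \ P) ∩ (leaves \ Q) = ∅ ∧ (P ∩ Q).Nonempty ∧ (P ∩ (leaves \ Q)).Nonempty ∧
        ((leaves \ P) ∩ Q).Nonempty) := by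
  intro leaves P Q
  have hsw1 : G.deleteEdges {s(v, u)} = G.deleteEdges {s(u, v)} := by rw [Sym2.eq_swap]
  have hsw2 : G.deleteEdges {s(v', u')} = G.deleteEdges {s(u', v')} := by rw [Sym2.eq_swap]
  have hB1 : ¬(G.deleteEdges {s(u, v)}).Reachable u v := br hT huv
  have hB2 : ¬(G.deleteEdges {s(u', v')}).Reachable u' v' := br hT huv'
  have h1' : (G.deleteEdges {s(u, v)}).Reachable u' v' := (adjd huv' (Ne.symm hne)).reachable
  have h2' : (G.deleteEdges {s(u', v')}).Reachable u v := (adjd huv hne).reachable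
  -- membership lemmas
  have hmemP : ∀ x, x ∈ P ↔ G.degree x = 1 ∧ (G.deleteEdges {s(u, v)}).Reachable u x := by
    intro x; rfl
  have hmemQ : ∀ x, x ∈ Q ↔ G.degree x = 1 ∧ (G.deleteEdges {s(u', v')}).Reachable u' x := by
    intro x; rfl
  have hmemL : ∀ x, x ∈ leaves ↔ G.degree x = 1 := by intro x; rfl
  have hnotP : ∀ x, G.degree x = 1 →
      (x ∉ P ↔ (G.deleteEdges {s(u, v)}).Reachable v x) := by
    intro x hx
    constructor
    · intro h
      rcases side hT huv x with h' | h'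
      · exact absurd ((hmemP x).mpr ⟨hx, h'⟩) h
      · exact h'
    · intro h hP
      exact hB1 (((hmemP x).mp hP).2.trans h.symm)
  have hnotQ : ∀ x, G.degree x = 1 →
      (x ∉ Q ↔ (G.deleteEdges {s(u', v')}).Reachable v' x) := by
    intro x hx
    constructor
    · intro h
      rcases side hT huv' x with h' | h'
      · exact absurd ((hmemQ x).mpr ⟨hx, h'⟩) h
      · exact h'
    · intro h hQ
      exact hB2 (((hmemQ x).mp hQ).2.trans h.symm)
  rcases side hT huv u' with hu' | hv'
  case inr =>
    -- u', v' on the v-side of e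
    rcases side hT huv' u with huu | hvu
    case inr =>
      -- u, v on the v'-side of e'
      obtain ⟨k1, k2, k3, k4⟩ := key hT hdeg huv huv' hne hv' hvu
      refine Or.inl ⟨?_, ?_, ?_, ?_⟩
      · rw [Set.eq_empty_iff_forall_notMem]
        rintro x ⟨hxP, hxQ⟩
        exact k1 x ⟨((hmemP x).mp hxP).2, ((hmemQ x).mp hxQ).2⟩
      · obtain ⟨z, hd, hz1, hz2⟩ := k2
        exact ⟨z, (hmemP z).mpr ⟨hd, hz1⟩, (hmemL z).mpr hd, fun h => hz2 (((hmemQ z).mp h).2)⟩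
      · obtain ⟨z, hd, hz1, hz2⟩ := k3
        exact ⟨z, ⟨(hmemL z).mpr hd, fun h => hz1 (((hmemP z).mp h).2)⟩, (hmemQ z).mpr ⟨hd, hz2⟩⟩
      · obtain ⟨z, hd, hz1, hz2⟩ := k4
        exact ⟨z, ⟨(hmemL z).mpr hd, fun h => hz1 (((hmemP z).mp h).2)⟩,
          (hmemL z).mpr hd, fun h => hz2 (((hmemQ z).mp h).2)⟩
    case inl =>
      -- u, v on the u'-side of e'
      have hkh1 : (G.deleteEdges {s(u, v)}).Reachable v v' := hv'.trans h1'
      have hkh2 : (G.deleteEdges {s(v', u')}).Reachable u' u := by rw [hsw2]; exact huu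
      have hne' : s(u, v) ≠ s(v', u') := by rw [show s(v', u') = s(u', v') from Sym2.eq_swap]; exact hne
      obtain ⟨k1, k2, k3, k4⟩ := key hT hdeg huv huv'.symm hne' hkh1 hkh2
      rw [hsw2] at k1 k2 k3 k4
      refine Or.inr (Or.inl ⟨?_, ?_, ?_, ?_⟩)
      · rw [Set.eq_empty_iff_forall_notMem]
        rintro x ⟨hxP, hxQ'⟩
        have hd := ((hmemP x).mp hxP).1
        exact k1 x ⟨((hmemP x).mp hxP).2, (hnotQ x hd).mp hxQ'.2⟩
      · obtain ⟨z, hd, hz1, hz2⟩ := k2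
        have hzQ : z ∈ Q := by
          rcases side hT huv' z with h | h
          · exact (hmemQ z).mpr ⟨hd, h⟩
          · exact absurd h hz2
        exact ⟨z, (hmemP z).mpr ⟨hd, hz1⟩, hzQ⟩
      · obtain ⟨z, hd, hz1, hz2⟩ := k4
        have hzQ : z ∈ Q := by
          rcases side hT huv' z with h | h
          · exact (hmemQ z).mpr ⟨hd, h⟩
          · exact absurd h hz2
        exact ⟨z, ⟨(hmemL z).mpr hd, fun h => hz1 (((hmemP z).mp h).2)⟩, hzQ⟩
      · obtain ⟨z, hd, hz1, hz2⟩ := k3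
        refine ⟨z, ⟨(hmemL z).mpr hd, fun h => hz1 (((hmemP z).mp h).2)⟩,
          (hmemL z).mpr hd, fun h => ?_⟩
        exact hB2 ((((hmemQ z).mp h).2).trans hz2.symm)
  case inl =>
    -- u', v' on the u-side of e
    have hR1uv' : (G.deleteEdges {s(u, v)}).Reachable u v' := hu'.trans h1'
    rcases side hT huv' u with huu | hvu
    case inr =>
      -- u, v on v'-side; apply key with (v, u, u', v')
      have hkh1 : (G.deleteEdges {s(v, u)}).Reachable u u' := by rw [hsw1]; exact hu'
      have hkh2 : (G.deleteEdges {s(u', v')}).Reachable v' v := hvu.trans h2'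
      have hne' : s(v, u) ≠ s(u', v') := by rw [show s(v, u) = s(u, v) from Sym2.eq_swap]; exact hne
      obtain ⟨k1, k2, k3, k4⟩ := key hT hdeg huv.symm huv' hne' hkh1 hkh2
      rw [hsw1] at k1 k2 k3 k4
      refine Or.inr (Or.inr (Or.inl ⟨?_, ?_, ?_, ?_⟩))
      · rw [Set.eq_empty_iff_forall_notMem]
        rintro x ⟨hxP', hxQ⟩
        have hd := (hmemL x).mp hxP'.1
        exact k1 x ⟨(hnotP x hd).mp hxP'.2, ((hmemQ x).mp hxQ).2⟩
      · obtain ⟨z, hd, hz1, hz2⟩ := k3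
        have hzP : z ∈ P := by
          rcases side hT huv z with h | h
          · exact (hmemP z).mpr ⟨hd, h⟩
          · exact absurd h hz1
        exact ⟨z, hzP, (hmemQ z).mpr ⟨hd, hz2⟩⟩
      · obtain ⟨z, hd, hz1, hz2⟩ := k4
        have hzP : z ∈ P := by
          rcases side hT huv z with h | h
          · exact (hmemP z).mpr ⟨hd, h⟩
          · exact absurd h hz1
        exact ⟨z, hzP, (hmemL z).mpr hd, fun h => hz2 (((hmemQ z).mp h).2)⟩
      · obtain ⟨z, hd, hz1, hz2⟩ := k2
        refine ⟨z, ⟨(hmemL z).mpr hd, fun h => ?_⟩, (hmemL z).mpr hd,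
          fun h => hz2 (((hmemQ z).mp h).2)⟩
        exact hB1 ((((hmemP z).mp h).2).trans hz1.symm)
    case inl =>
      -- u, v on u'-side; apply key with (v, u, v', u')
      have hkh1 : (G.deleteEdges {s(v, u)}).Reachable u v' := by rw [hsw1]; exact hR1uv'
      have hkh2 : (G.deleteEdges {s(v', u')}).Reachable u' v := by
        rw [hsw2]; exact huu.trans h2'
      have hne' : s(v, u) ≠ s(v', u') := by rw [show s(v, u) = s(u, v) from Sym2.eq_swap, show s(v', u') = s(u', v') from Sym2.eq_swap]; exact hne
      obtain ⟨k1, k2, k3, k4⟩ := key hT hdeg huv.symm huv'.symm hne' hkh1 hkh2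
      rw [hsw1, hsw2] at k1 k2 k3 k4
      refine Or.inr (Or.inr (Or.inr ⟨?_, ?_, ?_, ?_⟩))
      · rw [Set.eq_empty_iff_forall_notMem]
        rintro x ⟨hxP', hxQ'⟩
        have hd := (hmemL x).mp hxP'.1
        exact k1 x ⟨(hnotP x hd).mp hxP'.2, (hnotQ x hd).mp hxQ'.2⟩
      · obtain ⟨z, hd, hz1, hz2⟩ := k4
        have hzP : z ∈ P := by
          rcases side hT huv z with h | h
          · exact (hmemP z).mpr ⟨hd, h⟩
          · exact absurd h hz1
        have hzQ : z ∈ Q := by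
          rcases side hT huv' z with h | h
          · exact (hmemQ z).mpr ⟨hd, h⟩
          · exact absurd h hz2
        exact ⟨z, hzP, hzQ⟩
      · obtain ⟨z, hd, hz1, hz2⟩ := k3
        have hzP : z ∈ P := by
          rcases side hT huv z with h | h
          · exact (hmemP z).mpr ⟨hd, h⟩
          · exact absurd h hz1
        refine ⟨z, hzP, (hmemL z).mpr hd, fun h => ?_⟩
        exact hB2 ((((hmemQ z).mp h).2).trans hz2.symm)
      · obtain ⟨z, hd, hz1, hz2⟩ := k2
        have hzQ : z ∈ Q := by
          rcases side hT huv' z with h | h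
          · exact (hmemQ z).mpr ⟨hd, h⟩
          · exact absurd h hz2
        refine ⟨z, ⟨(hmemL z).mpr hd, fun h => ?_⟩, hzQ⟩
        exact hB1 ((((hmemP z).mp h).2).trans hz1.symm)
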